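/- Let X be a real normed linear space of finite dimension n, and let {x_1, ..., x_n} be a strongly orthonormal Hamel basis of X in the sense of Birkhoff-James. Then each x_i is an extreme point of the closed unit ball of X. -/

import Mathlib

/-- `x` together with the family is strongly orthonormal *relative to* the element `x i₀`
in the sense of Birkhoff-James: all members are unit vectors and
`‖x i₀‖ < ‖x i₀ + ∑_{j ≠ i₀} c j • x j‖` whenever not all the `c j` (`j ≠ i₀`) vanish. -/
def StronglyOrthRel {X : Type*} [NormedAddCommGroup X] [NormedSpace ℝ X]
    {n : ℕ} (x : Fin n → X) (i₀ : Fin n) : Prop :=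
  (∀ i, ‖x i‖ = 1) ∧
    ∀ c : Fin n → ℝ, (∃ j, j ≠ i₀ ∧ c j ≠ 0) →
      ‖x i₀‖ < ‖x i₀ + ∑ j ∈ Finset.univ.erase i₀, c j • x j‖

/-- A finite family of unit vectors that is strongly orthonormal in the sense of
Birkhoff-James. -/
def StronglyOrthSet {X : Type*} [NormedAddCommGroup X] [NormedSpace ℝ X]
    {n : ℕ} (x : Fin n → X) : Prop :=
  ∀ i, StronglyOrthRel x i


lemma key_coeff_lt {X : Type*} [NormedAddCommGroup X] [NormedSpace ℝ X] {n : ℕ}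
    (x : Fin n → X) (hso : StronglyOrthSet x) (i : Fin n) (α : Fin n → ℝ)
    (hj : ∃ j, j ≠ i ∧ α j ≠ 0) : |α i| < ‖∑ j, α j • x j‖ := by
  obtain ⟨hunit, hstrict⟩ := hso i
  have hsum : ∑ j, α j • x j = α i • x i + ∑ j ∈ Finset.univ.erase i, α j • x j :=
    (Finset.add_sum_erase _ _ (Finset.mem_univ i)).symm
  by_cases ht : α i = 0
  · rw [ht, abs_zero]
    have h1 : ‖x i‖ < ‖x i + ∑ j ∈ Finset.univ.erase i, α j • x j‖ := hstrict α hj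
    have h2 : ‖x i + ∑ j ∈ Finset.univ.erase i, α j • x j‖ ≤
        ‖x i‖ + ‖∑ j ∈ Finset.univ.erase i, α j • x j‖ := norm_add_le _ _
    have : ∑ j, α j • x j = ∑ j ∈ Finset.univ.erase i, α j • x j := by
      rw [hsum, ht, zero_smul, zero_add]
    rw [this]
    linarith
  · set c : Fin n → ℝ := fun j => α j / α i with hc
    have hcj : ∃ j, j ≠ i ∧ c j ≠ 0 := by
      obtain ⟨j, hji, hja⟩ := hj
      exact ⟨j, hji, div_ne_zero hja ht⟩
    have h1 : (1:ℝ) < ‖x i + ∑ j ∈ Finset.univ.erase i, c j • x j‖ := by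
      have := hstrict c hcj
      rwa [hunit i] at this
    have heq : ∑ j, α j • x j = α i • (x i + ∑ j ∈ Finset.univ.erase i, c j • x j) := by
      rw [hsum, smul_add, Finset.smul_sum]
      congr 1
      apply Finset.sum_congr rfl
      intro j hjmem
      rw [smul_smul, hc]
      field_simp
    rw [heq, norm_smul, Real.norm_eq_abs]
    have : (0:ℝ) < |α i| := abs_pos.mpr ht
    nlinarith

theorem stmt_10 {X : Type*} [NormedAddCommGroup X] [NormedSpace ℝ X] {n : ℕ}
    (hdim : Module.finrank ℝ X = n) (x : Fin n → X)
    (hli : LinearIndependent ℝ x) (hsp : Submodule.span ℝ (Set.range x) = ⊤)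
    (hso : StronglyOrthSet x) (i : Fin n) :
    x i ∈ Set.extremePoints ℝ (Metric.closedBall (0 : X) 1) := by
  have hunit := (hso i).1
  rw [mem_extremePoints]
  constructor
  · simp [mem_closedBall_zero_iff, hunit i]
  intro y hy z hz hseg
  obtain ⟨a, b, ha, hb, hab, hxy⟩ := hseg
  have hy1 : ‖y‖ ≤ 1 := by simpa [mem_closedBall_zero_iff] using hy
  have hz1 : ‖z‖ ≤ 1 := by simpa [mem_closedBall_zero_iff] using hz
  let B : Module.Basis (Fin n) ℝ X := Module.Basis.mk hli (by rw [hsp])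
  have hB : ∀ j, B j = x j := fun j => Module.Basis.mk_apply hli _ j
  set α : Fin n → ℝ := fun j => B.repr y j with hα
  set β : Fin n → ℝ := fun j => B.repr z j with hβ
  have hyrep : y = ∑ j, α j • x j := by
    conv_lhs => rw [← B.sum_repr y]
    exact Finset.sum_congr rfl fun j _ => by rw [hB]
  have hzrep : z = ∑ j, β j • x j := by
    conv_lhs => rw [← B.sum_repr z]
    exact Finset.sum_congr rfl fun j _ => by rw [hB]
  have hrepxi : ∀ j, B.repr (x i) j = if j = i then 1 else 0 := by
    intro j
    rw [← hB i, B.repr_self]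
    simp [Finsupp.single_apply, eq_comm]
  have hcomb : ∀ j, a * α j + b * β j = if j = i then 1 else 0 := by
    intro j
    rw [← hrepxi j, ← hxy]
    simp [hα, hβ]
  by_cases hoff : ∃ j, j ≠ i ∧ α j ≠ 0
  · exfalso
    obtain ⟨j, hji, hja⟩ := hoff
    have hbj : β j ≠ 0 := by
      have := hcomb j
      rw [if_neg hji] at this
      intro h0
      rw [h0, mul_zero, add_zero] at this
      exact hja (by
        have := mul_eq_zero.mp this
        rcases this with h | h
        · exact absurd h (ne_of_gt ha)
        · exact h)
    have h1 : |α i| < ‖y‖ := by rw [hyrep]; exact key_coeff_lt x hso i α ⟨j, hji, hja⟩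
    have h2 : |β i| < ‖z‖ := by rw [hzrep]; exact key_coeff_lt x hso i β ⟨j, hji, hbj⟩
    have hi : a * α i + b * β i = 1 := by simpa using hcomb i
    have := abs_le.mp (le_of_lt (lt_of_lt_of_le h1 hy1))
    have := abs_le.mp (le_of_lt (lt_of_lt_of_le h2 hz1))
    have hai : |α i| < 1 := lt_of_lt_of_le h1 hy1
    have hbi : |β i| < 1 := lt_of_lt_of_le h2 hz1
    have : a * α i ≤ a * |α i| := by
      have := le_abs_self (α i); nlinarith
    have : b * β i ≤ b * |β i| := by
      have := le_abs_self (β i); nlinarith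
    nlinarith [le_abs_self (α i), le_abs_self (β i)]
  · push_neg at hoff
    have hyx : y = α i • x i := by
      rw [hyrep]
      rw [Finset.sum_eq_single i]
      · intro j _ hji; rw [hoff j hji, zero_smul]
      · intro h; exact absurd (Finset.mem_univ i) h
    have hboff : ∀ j, j ≠ i → β j = 0 := by
      intro j hji
      have := hcomb j
      rw [if_neg hji, hoff j hji, mul_zero, zero_add] at this
      rcases mul_eq_zero.mp this with h | h
      · exact absurd h (ne_of_gt hb)
      · exact h
    have hzx : z = β i • x i := by
      rw [hzrep]
      rw [Finset.sum_eq_single i]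
      · intro j _ hji; rw [hboff j hji, zero_smul]
      · intro h; exact absurd (Finset.mem_univ i) h
    have hna : ‖y‖ = |α i| := by rw [hyx, norm_smul, Real.norm_eq_abs, hunit i, mul_one]
    have hnb : ‖z‖ = |β i| := by rw [hzx, norm_smul, Real.norm_eq_abs, hunit i, mul_one]
    have hi : a * α i + b * β i = 1 := by simpa using hcomb i
    have hai : |α i| ≤ 1 := by rw [← hna]; exact hy1
    have hbi : |β i| ≤ 1 := by rw [← hnb]; exact hz1
    have hαle : α i ≤ 1 := (abs_le.mp hai).2
    have hβle : β i ≤ 1 := (abs_le.mp hbi).2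
    have t1 : 0 ≤ a * (1 - α i) := mul_nonneg ha.le (by linarith)
    have t2 : 0 ≤ b * (1 - β i) := mul_nonneg hb.le (by linarith)
    have tsum : a * (1 - α i) + b * (1 - β i) = 0 := by ring_nf; linarith [hi, hab]
    have e1 : a * (1 - α i) = 0 := by linarith
    have e2 : b * (1 - β i) = 0 := by linarith
    have hα1 : α i = 1 := by
      rcases mul_eq_zero.mp e1 with h | h
      · exact absurd h (ne_of_gt ha)
      · linarith
    have hβ1 : β i = 1 := by
      rcases mul_eq_zero.mp e2 with h | h
      · exact absurd h (ne_of_gt hb)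
      · linarith
    constructor
    · rw [hyx, hα1, one_smul]
    · rw [hzx, hβ1, one_smul]
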